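/- Let 0 < q < p < 1 with p² < q. Then there exist nonzero vectors v_{12}, v_{32} ∈ ℓ²(ℕ₀) such that [(1 + q³/p⁴) I − (1/p²) α − (q³/p²) α*] v_{12} = 0 and γ* v_{32} = ((1/p²) I − α*) v_{12}. -/

import Mathlib

namespace SUqAux

open Finset
open scoped ENNReal

/-! ### Elementary inequalities -/

lemma geom_sum_le' {x : ℝ} (h0 : 0 ≤ x) (h1 : x < 1) (K : ℕ) :
    ∑ i ∈ range K, x ^ i ≤ 1 / (1 - x) := by
  have hx1 : x ≠ 1 := ne_of_lt h1
  have h2 : (0:ℝ) < 1 - x := by linarith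
  rw [geom_sum_eq hx1]
  have e1 : (x ^ K - 1) / (x - 1) = (1 - x ^ K) / (1 - x) := by
    rw [show x - 1 = -(1 - x) by ring, show x ^ K - 1 = -(1 - x ^ K) by ring,
      neg_div_neg_eq]
  rw [e1]
  have h3 : 1 - x ^ K ≤ 1 := by nlinarith [pow_nonneg h0 K]
  exact (div_le_div_iff_of_pos_right h2).mpr h3

lemma nat_mul_pow_le {x : ℝ} (h0 : 0 ≤ x) (h1 : x < 1) (n : ℕ) :
    (n + 1 : ℝ) * x ^ n ≤ 1 / (1 - x) := by
  have step : (n + 1 : ℝ) * x ^ n ≤ ∑ i ∈ range (n+1), x ^ i := by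
    have h : ∀ i ∈ range (n+1), x ^ n ≤ x ^ i := fun i hi =>
      pow_le_pow_of_le_one h0 h1.le (Nat.lt_succ_iff.mp (mem_range.mp hi))
    calc (n + 1 : ℝ) * x ^ n = ∑ _i ∈ range (n+1), x ^ n := by
          rw [Finset.sum_const, card_range]; ring
      _ ≤ ∑ i ∈ range (n+1), x ^ i := Finset.sum_le_sum h
  exact step.trans (geom_sum_le' h0 h1 _)

lemma sq_sum_le {x : ℝ} (h0 : 0 ≤ x) (h1 : x < 1) (K : ℕ) :
    ∑ j ∈ range K, ((j : ℝ) + 1) ^ 2 * x ^ j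
      ≤ ((1 - Real.sqrt (Real.sqrt x))⁻¹) ^ 2 * (1 - Real.sqrt x)⁻¹ := by
  set y := Real.sqrt (Real.sqrt x) with hy
  have hsx0 : 0 ≤ Real.sqrt x := Real.sqrt_nonneg x
  have hsx1 : Real.sqrt x < 1 := by
    rw [show (1:ℝ) = Real.sqrt 1 by rw [Real.sqrt_one]]
    exact Real.sqrt_lt_sqrt h0 h1
  have hy0 : 0 ≤ y := Real.sqrt_nonneg _
  have hy1 : y < 1 := by
    rw [hy, show (1:ℝ) = Real.sqrt 1 by rw [Real.sqrt_one]]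
    exact Real.sqrt_lt_sqrt hsx0 hsx1
  have hy2 : y ^ 2 = Real.sqrt x := Real.sq_sqrt hsx0
  have hy4 : (y ^ 2) ^ 2 = x := by rw [hy2]; exact Real.sq_sqrt h0
  have hstep : ∀ j : ℕ, ((j : ℝ) + 1) ^ 2 * x ^ j
      ≤ ((1 - y)⁻¹) ^ 2 * (Real.sqrt x) ^ j := by
    intro j
    have h4 : ((j:ℝ) + 1) * y ^ j ≤ (1 - y)⁻¹ := by
      have := nat_mul_pow_le hy0 hy1 j
      rwa [one_div] at this
    have hnn : 0 ≤ ((j:ℝ) + 1) * y ^ j := by positivity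
    calc ((j : ℝ) + 1) ^ 2 * x ^ j
        = (((j:ℝ) + 1) * y ^ j) ^ 2 * (y ^ 2) ^ j := by
          rw [← hy4]; ring
      _ ≤ ((1 - y)⁻¹) ^ 2 * (y ^ 2) ^ j := by
          have h5 : (((j:ℝ) + 1) * y ^ j) ^ 2 ≤ ((1 - y)⁻¹) ^ 2 :=
            pow_le_pow_left₀ hnn h4 2
          exact mul_le_mul_of_nonneg_right h5 (by positivity)
      _ = ((1 - y)⁻¹) ^ 2 * (Real.sqrt x) ^ j := by rw [hy2]
  calc ∑ j ∈ range K, ((j : ℝ) + 1) ^ 2 * x ^ j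
      ≤ ∑ j ∈ range K, ((1 - y)⁻¹) ^ 2 * (Real.sqrt x) ^ j :=
        Finset.sum_le_sum (fun j _ => hstep j)
    _ = ((1 - y)⁻¹) ^ 2 * ∑ j ∈ range K, (Real.sqrt x) ^ j := by
        rw [Finset.mul_sum]
    _ ≤ ((1 - y)⁻¹) ^ 2 * (1 - Real.sqrt x)⁻¹ := by
        apply mul_le_mul_of_nonneg_left ?_ (by positivity)
        have := geom_sum_le' hsx0 hsx1 K
        rwa [one_div] at this

lemma pow_sub_le {x y : ℝ} (hy : 0 ≤ y) (hxy : y ≤ x) (n : ℕ) :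
    x ^ (n+1) - y ^ (n+1) ≤ (n+1 : ℝ) * (x - y) * x ^ n := by
  induction n with
  | zero => simp
  | succ n ih =>
    have hx : 0 ≤ x := hy.trans hxy
    have hyx : y ^ (n+1) ≤ x ^ (n+1) := pow_le_pow_left₀ hy hxy _
    calc x ^ (n+2) - y ^ (n+2) = x * (x ^ (n+1) - y ^ (n+1)) + y ^ (n+1) * (x - y) := by
          ring
      _ ≤ x * ((n+1 : ℝ) * (x - y) * x ^ n) + x ^ (n+1) * (x - y) := by
          have h1 := mul_le_mul_of_nonneg_left ih hx
          have h2 := mul_le_mul_of_nonneg_right hyx (by linarith : (0:ℝ) ≤ x - y)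
          linarith
      _ = (n+2 : ℝ) * (x - y) * x ^ (n+1) := by push_cast; ring
      _ = ((n+1 : ℕ) + 1 : ℝ) * (x - y) * x ^ (n+1) := by push_cast; ring

lemma exp_le_one_sub {q2 x : ℝ} (hx0 : 0 ≤ x) (hx : x ≤ q2) (hq : q2 < 1) :
    Real.exp (-(x / (1 - q2))) ≤ 1 - x := by
  have hq2 : (0:ℝ) < 1 - q2 := by linarith
  have hx1 : 0 < 1 - x := by linarith
  set yy := x / (1 - q2) with hyy
  have hyy0 : 0 ≤ yy := by positivity
  have h1 : 1 + yy ≤ Real.exp yy := by linarith [Real.add_one_le_exp yy]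
  have h2 : 1 ≤ (1 - x) * (1 + yy) := by
    have e : (1 - x) * (1 + yy) = 1 + x * (q2 - x) / (1 - q2) := by
      rw [hyy]; field_simp; ring
    rw [e]
    have h6 : 0 ≤ x * (q2 - x) / (1 - q2) :=
      div_nonneg (mul_nonneg hx0 (by linarith)) hq2.le
    linarith
  have h3 : 1 ≤ (1 - x) * Real.exp yy := by
    calc (1:ℝ) ≤ (1 - x) * (1 + yy) := h2
      _ ≤ (1 - x) * Real.exp yy := mul_le_mul_of_nonneg_left h1 hx1.le
  rw [Real.exp_neg, inv_le_iff_one_le_mul₀ (Real.exp_pos _)]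
  linarith

/-! ### The recursive sequences -/

noncomputable def MM (q p : ℝ) : ℝ := max (p ^ 2) (q ^ 3 / p ^ 2)
noncomputable def mm (q p : ℝ) : ℝ := min (p ^ 2) (q ^ 3 / p ^ 2)
noncomputable def tt (q p : ℝ) : ℝ := max (q ^ 3 / p ^ 2) (q ^ 2 * MM q p)

noncomputable def dd (q p : ℝ) : ℕ → ℝ
  | 0 => 1
  | 1 => p ^ 2 + q ^ 3 / p ^ 2
  | (k+2) => (p ^ 2 + q ^ 3 / p ^ 2) * dd q p (k+1) - q ^ 3 * (1 - (q^2) ^ (k+1)) * dd q p k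

noncomputable def hh (q p : ℝ) : ℕ → ℝ
  | 0 => 1
  | (k+1) => MM q p * hh q p k + mm q p ^ (k+1)

noncomputable def th (q p : ℝ) : ℕ → ℝ
  | 0 => 0
  | (k+1) => q ^ 3 * th q p k + q ^ 5 * (q^2) ^ k * hh q p k * hh q p (k+1)

noncomputable def PP (q p : ℝ) : ℕ → ℝ
  | 0 => 1
  | (k+1) => PP q p k * (1 + th q p k / (hh q p k * hh q p (k+1)))

noncomputable def poch (q : ℝ) : ℕ → ℝ
  | 0 => 1
  | (k+1) => poch q k * (1 - (q^2) ^ (k+1))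

noncomputable def ee (q p : ℝ) (k : ℕ) : ℝ := dd q p (k+1) - p ^ 2 * dd q p k

noncomputable def uu (q p : ℝ) (l : ℕ) : ℝ :=
  dd q p l / p ^ 2 - (1 - (q^2) ^ l) * dd q p (l-1)

noncomputable def cc (q p : ℝ) (l : ℕ) : ℝ := dd q p l / Real.sqrt (poch q l)

noncomputable def ww (q p : ℝ) (l : ℕ) : ℝ := uu q p l / (q ^ l * Real.sqrt (poch q l))

/-! ### Basic parameter facts -/

section Params

variable {q p : ℝ}

lemma hq1 (hqp : q < p) (hp1 : p < 1) : q < 1 := hqp.trans hp1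

lemma hp0 (hq0 : 0 < q) (hqp : q < p) : 0 < p := hq0.trans hqp

lemma hs0 (hq0 : 0 < q) (hqp : q < p) : 0 < q ^ 3 / p ^ 2 := by
  have := hp0 hq0 hqp; positivity

lemma hsltq (hq0 : 0 < q) (hqp : q < p) : q ^ 3 / p ^ 2 < q := by
  have hp := hp0 hq0 hqp
  rw [div_lt_iff₀ (by positivity)]
  have h2 : q^2 < p^2 := by nlinarith
  nlinarith

lemma hM0 (hq0 : 0 < q) (hqp : q < p) : 0 < MM q p :=
  lt_of_lt_of_le (by have := hp0 hq0 hqp; positivity) (le_max_left _ _)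

lemma hm0 (hq0 : 0 < q) (hqp : q < p) : 0 < mm q p :=
  lt_min (by have := hp0 hq0 hqp; positivity) (hs0 hq0 hqp)

lemma hmM : mm q p ≤ MM q p := min_le_max

lemma hMq (hq0 : 0 < q) (hqp : q < p) (hpq : p ^ 2 < q) : MM q p < q :=
  max_lt hpq (hsltq hq0 hqp)

lemma hMmmul (hq0 : 0 < q) (hqp : q < p) : MM q p * mm q p = q ^ 3 := by
  have hp := hp0 hq0 hqp
  rw [MM, mm, mul_comm, min_mul_max]
  field_simp

lemma hMmadd : MM q p + mm q p = p ^ 2 + q ^ 3 / p ^ 2 := by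
  rw [MM, mm, add_comm, min_add_max]

lemma hnu1 (hq0 : 0 < q) (hqp : q < p) (hp1 : p < 1) (hpq : p ^ 2 < q) :
    MM q p ^ 2 / q < 1 := by
  have h1 := hMq hq0 hqp hpq
  have h2 := hM0 hq0 hqp
  have h3 := hq1 hqp hp1
  rw [div_lt_one hq0]
  nlinarith

lemma ht0 (hq0 : 0 < q) (hqp : q < p) : 0 < tt q p :=
  lt_of_lt_of_le (hs0 hq0 hqp) (le_max_left _ _)

lemma htq (hq0 : 0 < q) (hqp : q < p) (hp1 : p < 1) (hpq : p ^ 2 < q) : tt q p < q := by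
  apply max_lt (hsltq hq0 hqp)
  have h1 := hMq hq0 hqp hpq
  have h3 := hq1 hqp hp1
  have h2 := hM0 hq0 hqp
  nlinarith

end Params


/-! ### Sequence estimates -/

section Seq

variable {q p : ℝ}

lemma hh_succ_def (k : ℕ) : hh q p (k+1) = MM q p * hh q p k + mm q p ^ (k+1) := rfl

lemma hh_pos (hq0 : 0 < q) (hqp : q < p) (k : ℕ) : 0 < hh q p k := by
  induction k with
  | zero => exact one_pos
  | succ k ih =>
    have hM := hM0 (q := q) (p := p) hq0 hqp
    have hm := hm0 (q := q) (p := p) hq0 hqp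
    rw [hh_succ_def]
    have h1 : 0 < MM q p * hh q p k := mul_pos hM ih
    have h2 : 0 < mm q p ^ (k+1) := pow_pos hm _
    linarith

lemma hh_le (hq0 : 0 < q) (hqp : q < p) (k : ℕ) :
    hh q p k ≤ ((k:ℝ)+1) * MM q p ^ k := by
  induction k with
  | zero => simp [hh]
  | succ k ih =>
    have hM := hM0 (q := q) (p := p) hq0 hqp
    have hm := hm0 (q := q) (p := p) hq0 hqp
    rw [hh_succ_def]
    have e1 : MM q p * hh q p k ≤ MM q p * (((k:ℝ)+1) * MM q p ^ k) :=
      mul_le_mul_of_nonneg_left ih hM.le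
    have e2 : mm q p ^ (k+1) ≤ MM q p ^ (k+1) := pow_le_pow_left₀ hm.le hmM _
    have e3 : MM q p * (((k:ℝ)+1) * MM q p ^ k) = ((k:ℝ)+1) * MM q p ^ (k+1) := by
      rw [pow_succ]; ring
    push_cast
    linarith

lemma hg0 (hq0 : 0 < q) : 0 < Real.sqrt (q^3) := Real.sqrt_pos.mpr (by positivity)

lemma hg2 (hq0 : 0 < q) : Real.sqrt (q^3) ^ 2 = q^3 := Real.sq_sqrt (by positivity)

lemma hgM (hq0 : 0 < q) (hqp : q < p) : Real.sqrt (q^3) ≤ MM q p := by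
  have hM := hM0 (q := q) (p := p) hq0 hqp
  have hm := hm0 (q := q) (p := p) hq0 hqp
  have h1 : q^3 ≤ MM q p ^ 2 := by nlinarith [hMmmul hq0 hqp, hmM (q := q) (p := p)]
  calc Real.sqrt (q^3) ≤ Real.sqrt (MM q p ^ 2) := Real.sqrt_le_sqrt h1
    _ = MM q p := Real.sqrt_sq hM.le

lemma hgm (hq0 : 0 < q) (hqp : q < p) : mm q p ≤ Real.sqrt (q^3) := by
  have hm := hm0 (q := q) (p := p) hq0 hqp
  have hM := hM0 (q := q) (p := p) hq0 hqp
  have h1 : mm q p ^ 2 ≤ q^3 := by nlinarith [hMmmul hq0 hqp, hmM (q := q) (p := p)]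
  calc mm q p = Real.sqrt (mm q p ^ 2) := (Real.sqrt_sq hm.le).symm
    _ ≤ Real.sqrt (q^3) := Real.sqrt_le_sqrt h1

lemma h2g (hq0 : 0 < q) (hqp : q < p) :
    2 * Real.sqrt (q^3) ≤ MM q p + mm q p := by
  have h1 := hgM hq0 hqp
  have h2 := hgm hq0 hqp
  have h3 := hg0 (q := q) hq0
  have h4 := hg2 (q := q) hq0
  have h5 := hMmmul hq0 hqp
  nlinarith [mul_nonneg (sub_nonneg.mpr h1) (sub_nonneg.mpr h2)]

lemma hh_geo (hq0 : 0 < q) (hqp : q < p) (k : ℕ) :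
    ((k:ℝ)+1) * Real.sqrt (q^3) ^ k ≤ hh q p k := by
  induction k with
  | zero => simp [hh]
  | succ k ih =>
    have hM := hM0 (q := q) (p := p) hq0 hqp
    have hm := hm0 (q := q) (p := p) hq0 hqp
    have hg := hg0 (q := q) hq0
    set g := Real.sqrt (q^3) with hgdef
    have e1 : g^(k+1) - mm q p^(k+1) ≤ ((k:ℝ)+1) * (g - mm q p) * g^k :=
      pow_sub_le hm.le (hgm hq0 hqp) k
    have e2 : ((k:ℝ)+1) * (g - mm q p) * g^k ≤ ((k:ℝ)+1) * (MM q p - g) * g^k := by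
      apply mul_le_mul_of_nonneg_right _ (pow_nonneg hg.le k)
      have := h2g hq0 hqp
      apply mul_le_mul_of_nonneg_left _ (by positivity : (0:ℝ) ≤ (k:ℝ)+1)
      linarith
    have e3 : MM q p * (((k:ℝ)+1) * g^k) ≤ MM q p * hh q p k :=
      mul_le_mul_of_nonneg_left ih hM.le
    rw [hh_succ_def]
    have epow : g^(k+1) = g * g^k := by rw [pow_succ]; ring
    rw [epow] at e1 ⊢
    push_cast
    nlinarith [e1, e2, e3]

lemma hh_rec2 (k : ℕ) :
    hh q p (k+2) = (MM q p + mm q p) * hh q p (k+1) - MM q p * mm q p * hh q p k := by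
  have e : mm q p^(k+1) = hh q p (k+1) - MM q p * hh q p k := by
    rw [hh_succ_def]; ring
  calc hh q p (k+2) = MM q p * hh q p (k+1) + mm q p^(k+2) := rfl
    _ = MM q p * hh q p (k+1) + mm q p * mm q p^(k+1) := by rw [pow_succ]; ring
    _ = _ := by rw [e]; ring

lemma dd_zero : dd q p 0 = 1 := rfl
lemma dd_one : dd q p 1 = p ^ 2 + q ^ 3 / p ^ 2 := rfl
lemma dd_rec (k : ℕ) : dd q p (k+2)
    = (p ^ 2 + q ^ 3 / p ^ 2) * dd q p (k+1) - q ^ 3 * (1 - (q^2) ^ (k+1)) * dd q p k := rfl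

lemma dd_pos_ge (hq0 : 0 < q) (hqp : q < p) (k : ℕ) :
    0 < dd q p k ∧ p^2 * dd q p k ≤ dd q p (k+1) := by
  have hp := hp0 hq0 hqp
  have hs := hs0 hq0 hqp
  induction k with
  | zero =>
    constructor
    · rw [dd_zero]; exact one_pos
    · rw [dd_zero, dd_one]; nlinarith
  | succ k ih =>
    obtain ⟨h1, h2⟩ := ih
    have h3 : 0 < dd q p (k+1) := lt_of_lt_of_le (by positivity) h2
    refine ⟨h3, ?_⟩
    rw [dd_rec]
    have A : q^3 * dd q p k ≤ q^3/p^2 * dd q p (k+1) := by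
      have h4 := mul_le_mul_of_nonneg_left h2 hs.le
      calc q^3 * dd q p k = q^3/p^2 * (p^2 * dd q p k) := by field_simp
        _ ≤ q^3/p^2 * dd q p (k+1) := h4
    have B : q^3 * (1 - (q^2)^(k+1)) * dd q p k ≤ q^3 * dd q p k := by
      have hQ : 0 ≤ (q^2)^(k+1) := by positivity
      nlinarith [mul_nonneg (mul_nonneg (by positivity : (0:ℝ) ≤ q^3) hQ) h1.le]
    nlinarith

lemma wron (hq0 : 0 < q) (hqp : q < p) (k : ℕ) :
    dd q p (k+2) * hh q p (k+1) - dd q p (k+1) * hh q p (k+2)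
      = q^3 * (dd q p (k+1) * hh q p k - dd q p k * hh q p (k+1))
        + q^3 * (q^2)^(k+1) * dd q p k * hh q p (k+1) := by
  rw [hh_rec2, hMmadd, hMmmul hq0 hqp, dd_rec]
  ring

lemma th_nonneg (hq0 : 0 < q) (hqp : q < p) (k : ℕ) : 0 ≤ th q p k := by
  induction k with
  | zero => simp [th]
  | succ k ih =>
    show (0:ℝ) ≤ q ^ 3 * th q p k + q ^ 5 * (q^2) ^ k * hh q p k * hh q p (k+1)
    have h1 := hh_pos hq0 hqp k
    have h2 := hh_pos hq0 hqp (k+1)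
    have h3 : 0 ≤ q ^ 3 * th q p k := mul_nonneg (by positivity) ih
    have h4 : 0 ≤ q ^ 5 * (q^2) ^ k * hh q p k * hh q p (k+1) := by positivity
    linarith

lemma th_bound (hq0 : 0 < q) (hqp : q < p) (k : ℕ) :
    th q p k ≤ (q^3 / MM q p) * (q^3)^k
      * ∑ i ∈ range (k+1), ((i:ℝ)+1)^2 * (MM q p^2/q)^i := by
  have hM := hM0 (q := q) (p := p) hq0 hqp
  induction k with
  | zero =>
    show th q p 0 ≤ _
    rw [show th q p 0 = 0 from rfl]
    apply mul_nonneg (by positivity)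
    apply Finset.sum_nonneg
    intro i _
    positivity
  | succ k ih =>
    have hhk := hh_pos hq0 hqp k
    have hhk1 := hh_pos hq0 hqp (k+1)
    have step1 : th q p (k+1) ≤ q^3 * ((q^3 / MM q p) * (q^3)^k
        * ∑ i ∈ range (k+1), ((i:ℝ)+1)^2 * (MM q p^2/q)^i)
        + q^5 * (q^2)^k * (((k:ℝ)+1) * MM q p ^ k) * (((k:ℝ)+2) * MM q p ^ (k+1)) := by
      show q ^ 3 * th q p k + q ^ 5 * (q^2) ^ k * hh q p k * hh q p (k+1) ≤ _
      have e1 : q ^ 3 * th q p k ≤ q^3 * ((q^3 / MM q p) * (q^3)^k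
          * ∑ i ∈ range (k+1), ((i:ℝ)+1)^2 * (MM q p^2/q)^i) :=
        mul_le_mul_of_nonneg_left ih (by positivity)
      have e2 : q ^ 5 * (q^2) ^ k * hh q p k * hh q p (k+1)
          ≤ q^5 * (q^2)^k * (((k:ℝ)+1) * MM q p ^ k) * (((k:ℝ)+2) * MM q p ^ (k+1)) := by
        have b1 := hh_le hq0 hqp k
        have b2 := hh_le hq0 hqp (k+1)
        push_cast at b2
        have : q ^ 5 * (q^2) ^ k * hh q p k * hh q p (k+1)
            ≤ q ^ 5 * (q^2) ^ k * (((k:ℝ)+1) * MM q p ^ k) * hh q p (k+1) := by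
          apply mul_le_mul_of_nonneg_right _ hhk1.le
          exact mul_le_mul_of_nonneg_left b1 (by positivity)
        apply this.trans
        apply mul_le_mul_of_nonneg_left _ (by positivity)
        linarith
      linarith
    apply step1.trans
    have epow1 : ((MM q p^2/q))^(k+1) = (MM q p^2)^(k+1) / q^(k+1) := div_pow _ _ _
    have epow2 : (q^3)^(k+1) / q^(k+1) = (q^2)^(k+1) := by
      rw [← div_pow]
      congr 1
      field_simp
    have epow3 : (MM q p^2)^(k+1) = MM q p^k * MM q p^(k+1) * MM q p := by
      rw [← pow_add, ← pow_succ, ← pow_mul]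
      congr 1
      ring
    have key : (q^3 / MM q p) * (q^3)^(k+1) * (((k:ℝ)+1+1)^2 * (MM q p^2/q)^(k+1))
        = q^5 * (q^2)^k * MM q p^k * MM q p^(k+1) * ((k:ℝ)+2)^2 := by
      rw [epow1, epow3]
      have hqk : (q:ℝ)^(k+1) ≠ 0 := by positivity
      have e4 : (q^3)^(k+1) = (q^2)^(k+1) * q^(k+1) := by
        rw [← mul_pow, show q^2*q = q^3 by ring]
      rw [e4]
      have e5 : (q^2)^(k+1) = (q^2)^k * q^2 := by rw [pow_succ]
      rw [e5]
      field_simp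
      ring
    have hsum : (q^3 / MM q p) * (q^3)^(k+1)
        * (∑ i ∈ range (k+1), ((i:ℝ)+1)^2 * (MM q p^2/q)^i + ((k:ℝ)+1+1)^2 * (MM q p^2/q)^(k+1))
        = q^3 * ((q^3 / MM q p) * (q^3)^k * ∑ i ∈ range (k+1), ((i:ℝ)+1)^2 * (MM q p^2/q)^i)
          + (q^3 / MM q p) * (q^3)^(k+1) * (((k:ℝ)+1+1)^2 * (MM q p^2/q)^(k+1)) := by
      rw [pow_succ]
      ring
    have hterm : ∑ i ∈ range (k+1+1), ((i:ℝ)+1)^2 * (MM q p^2/q)^i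
        = (∑ i ∈ range (k+1), ((i:ℝ)+1)^2 * (MM q p^2/q)^i)
          + ((k:ℝ)+1+1)^2 * (MM q p^2/q)^(k+1) := by
      rw [Finset.sum_range_succ]; push_cast; ring
    rw [hterm, hsum, key]
    have efin : q^5 * (q^2)^k * (((k:ℝ)+1) * MM q p ^ k) * (((k:ℝ)+2) * MM q p ^ (k+1))
        ≤ q^5 * (q^2)^k * MM q p^k * MM q p^(k+1) * ((k:ℝ)+2)^2 := by
      have h6 : (0:ℝ) ≤ q^5 * (q^2)^k * MM q p^k * MM q p^(k+1) := by positivity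
      nlinarith [h6]
    linarith [efin]

end Seq


/-! ### Groenwall bound -/

noncomputable def nuB (q p : ℝ) : ℝ :=
  ((1 - Real.sqrt (Real.sqrt (MM q p^2/q)))⁻¹) ^ 2 * (1 - Real.sqrt (MM q p^2/q))⁻¹

noncomputable def Ctau (q p : ℝ) : ℝ := q^3 * nuB q p / (MM q p * Real.sqrt (q^3))

noncomputable def ED (q p : ℝ) : ℝ := Real.exp (Ctau q p)

section Seq2

variable {q p : ℝ}

lemma sqrt_nu_lt_one (hq0 : 0 < q) (hqp : q < p) (hp1 : p < 1) (hpq : p ^ 2 < q) :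
    Real.sqrt (MM q p^2/q) < 1 := by
  have h1 := hnu1 hq0 hqp hp1 hpq
  have h0 : (0:ℝ) ≤ MM q p^2/q := by positivity
  calc Real.sqrt (MM q p^2/q) < Real.sqrt 1 := Real.sqrt_lt_sqrt h0 h1
    _ = 1 := Real.sqrt_one

lemma sqrt_sqrt_nu_lt_one (hq0 : 0 < q) (hqp : q < p) (hp1 : p < 1) (hpq : p ^ 2 < q) :
    Real.sqrt (Real.sqrt (MM q p^2/q)) < 1 := by
  have h1 := sqrt_nu_lt_one hq0 hqp hp1 hpq
  calc Real.sqrt (Real.sqrt (MM q p^2/q)) < Real.sqrt 1 :=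
        Real.sqrt_lt_sqrt (Real.sqrt_nonneg _) h1
    _ = 1 := Real.sqrt_one

lemma nuB_pos (hq0 : 0 < q) (hqp : q < p) (hp1 : p < 1) (hpq : p ^ 2 < q) :
    0 < nuB q p := by
  have h1 := sqrt_nu_lt_one hq0 hqp hp1 hpq
  have h2 := sqrt_sqrt_nu_lt_one hq0 hqp hp1 hpq
  rw [nuB]
  have h3 : 0 < 1 - Real.sqrt (Real.sqrt (MM q p^2/q)) := by linarith
  have h4 : 0 < 1 - Real.sqrt (MM q p^2/q) := by linarith
  positivity

lemma Ctau_pos (hq0 : 0 < q) (hqp : q < p) (hp1 : p < 1) (hpq : p ^ 2 < q) :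
    0 < Ctau q p := by
  have h1 := nuB_pos hq0 hqp hp1 hpq
  have h2 := hM0 (q := q) (p := p) hq0 hqp
  have h3 := hg0 (q := q) hq0
  rw [Ctau]
  positivity

lemma th_le_final (hq0 : 0 < q) (hqp : q < p) (hp1 : p < 1) (hpq : p ^ 2 < q) (k : ℕ) :
    th q p k ≤ (q^3 / MM q p) * (q^3)^k * nuB q p := by
  have hM := hM0 (q := q) (p := p) hq0 hqp
  apply (th_bound hq0 hqp k).trans
  apply mul_le_mul_of_nonneg_left _ (by positivity)
  exact sq_sum_le (by positivity) (hnu1 hq0 hqp hp1 hpq) (k+1)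

lemma tau_le (hq0 : 0 < q) (hqp : q < p) (hp1 : p < 1) (hpq : p ^ 2 < q) (k : ℕ) :
    th q p k / (hh q p k * hh q p (k+1))
      ≤ Ctau q p * (1/((k:ℝ)+1) - 1/((k:ℝ)+2)) := by
  have hM := hM0 (q := q) (p := p) hq0 hqp
  have hg := hg0 (q := q) hq0
  have hB := nuB_pos hq0 hqp hp1 hpq
  set g := Real.sqrt (q^3) with hgdef
  have hden : (((k:ℝ)+1) * g^k) * (((k:ℝ)+2) * g^(k+1)) ≤ hh q p k * hh q p (k+1) := by
    have b1 := hh_geo hq0 hqp k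
    have b2 := hh_geo hq0 hqp (k+1)
    push_cast at b2
    have hb1 : 0 ≤ ((k:ℝ)+1) * g^k := by positivity
    have hb2 : 0 ≤ ((k:ℝ)+2) * g^(k+1) := by positivity
    calc (((k:ℝ)+1) * g^k) * (((k:ℝ)+2) * g^(k+1))
        ≤ hh q p k * (((k:ℝ)+2) * g^(k+1)) := mul_le_mul_of_nonneg_right b1 hb2
      _ ≤ hh q p k * hh q p (k+1) := by
          apply mul_le_mul_of_nonneg_left _ (hh_pos hq0 hqp k).le
          convert b2 using 2
          · rfl
          · push_cast; ring
  have hdenpos : 0 < (((k:ℝ)+1) * g^k) * (((k:ℝ)+2) * g^(k+1)) := by positivity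
  have step : th q p k / (hh q p k * hh q p (k+1))
      ≤ ((q^3 / MM q p) * (q^3)^k * nuB q p) / ((((k:ℝ)+1) * g^k) * (((k:ℝ)+2) * g^(k+1))) :=
    div_le_div₀ (by positivity) (th_le_final hq0 hqp hp1 hpq k) hdenpos hden
  apply step.trans
  have e6 : g ^ k * g ^ (k+1) = (g^2)^k * g := by
    rw [← pow_mul, ← pow_succ, ← pow_add]
    congr 1
    omega
  have e7 : g ^ k * g ^ (k+1) = (q^3)^k * g := by
    rw [e6, hg2 hq0]
  have ednz : (((k:ℝ)+1) * g^k) * (((k:ℝ)+2) * g^(k+1))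
      = ((k:ℝ)+1) * ((k:ℝ)+2) * ((q^3)^k * g) := by rw [← e7]; ring
  rw [ednz, Ctau]
  have hk1 : ((k:ℝ)+1) ≠ 0 := by positivity
  have hk2 : ((k:ℝ)+2) ≠ 0 := by positivity
  have hq3k : ((q:ℝ)^3)^k ≠ 0 := by positivity
  have hgne : g ≠ 0 := ne_of_gt hg
  have hMne : MM q p ≠ 0 := ne_of_gt hM
  apply le_of_eq
  field_simp
  ring

lemma PP_pos (hq0 : 0 < q) (hqp : q < p) (k : ℕ) : 0 < PP q p k := by
  induction k with
  | zero => exact one_pos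
  | succ k ih =>
    show 0 < PP q p k * (1 + th q p k / (hh q p k * hh q p (k+1)))
    have h1 : 0 ≤ th q p k / (hh q p k * hh q p (k+1)) :=
      div_nonneg (th_nonneg hq0 hqp k)
        (mul_nonneg (hh_pos hq0 hqp k).le (hh_pos hq0 hqp (k+1)).le)
    have : (0:ℝ) < 1 + th q p k / (hh q p k * hh q p (k+1)) := by linarith
    exact mul_pos ih this

lemma PP_le (hq0 : 0 < q) (hqp : q < p) (hp1 : p < 1) (hpq : p ^ 2 < q) (k : ℕ) :
    PP q p k ≤ Real.exp (Ctau q p * (1 - 1/((k:ℝ)+1))) := by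
  induction k with
  | zero =>
    show (1:ℝ) ≤ _
    norm_num
  | succ k ih =>
    show PP q p k * (1 + th q p k / (hh q p k * hh q p (k+1))) ≤ _
    set τ := th q p k / (hh q p k * hh q p (k+1)) with hτ
    have hτ0 : 0 ≤ τ :=
      div_nonneg (th_nonneg hq0 hqp k)
        (mul_nonneg (hh_pos hq0 hqp k).le (hh_pos hq0 hqp (k+1)).le)
    have h1 : 1 + τ ≤ Real.exp τ := by linarith [Real.add_one_le_exp τ]
    have h2 : PP q p k * (1 + τ) ≤ Real.exp (Ctau q p * (1 - 1/((k:ℝ)+1))) * Real.exp τ := by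
      apply mul_le_mul ih h1 (by linarith) (Real.exp_pos _).le
    apply h2.trans
    rw [← Real.exp_add]
    apply Real.exp_le_exp.mpr
    have h4 : τ ≤ Ctau q p * (1/((k:ℝ)+1) - 1/((k:ℝ)+2)) := tau_le hq0 hqp hp1 hpq k
    push_cast
    have e : Ctau q p * (1 - 1/((k:ℝ)+1)) + Ctau q p * (1/((k:ℝ)+1) - 1/((k:ℝ)+2))
        = Ctau q p * (1 - 1/((k:ℝ)+1+1)) := by ring
    linarith [h4, e]

lemma PP_le' (hq0 : 0 < q) (hqp : q < p) (hp1 : p < 1) (hpq : p ^ 2 < q) (k : ℕ) :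
    PP q p k ≤ ED q p := by
  apply (PP_le hq0 hqp hp1 hpq k).trans
  rw [ED]
  apply Real.exp_le_exp.mpr
  have hC := Ctau_pos hq0 hqp hp1 hpq
  have h1 : 0 < 1/((k:ℝ)+1) := by positivity
  nlinarith

lemma gron (hq0 : 0 < q) (hqp : q < p) (k : ℕ) :
    dd q p k ≤ PP q p k * hh q p k ∧
      dd q p (k+1) * hh q p k - dd q p k * hh q p (k+1) ≤ PP q p k * th q p k := by
  induction k with
  | zero =>
    constructor
    · rw [dd_zero]
      show (1:ℝ) ≤ 1 * 1
      norm_num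
    · show dd q p 1 * 1 - dd q p 0 * hh q p 1 ≤ 1 * th q p 0
      rw [dd_zero, dd_one, show th q p 0 = (0:ℝ) from rfl,
        show hh q p 1 = MM q p * 1 + mm q p ^ 1 from rfl]
      have := hMmadd (q := q) (p := p)
      nlinarith [this]
  | succ k ih =>
    obtain ⟨ih1, ih2⟩ := ih
    have hhk := hh_pos hq0 hqp k
    have hhk1 := hh_pos hq0 hqp (k+1)
    have hP := PP_pos hq0 hqp k
    have hth := th_nonneg hq0 hqp k
    have hd := (dd_pos_ge hq0 hqp k).1
    have hPmono : PP q p k ≤ PP q p (k+1) := by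
      show PP q p k ≤ PP q p k * (1 + th q p k / (hh q p k * hh q p (k+1)))
      have h1 : 0 ≤ th q p k / (hh q p k * hh q p (k+1)) :=
        div_nonneg hth (mul_nonneg hhk.le hhk1.le)
      nlinarith
    constructor
    · -- dd (k+1) ≤ PP (k+1) * hh (k+1)
      have hexp : PP q p (k+1) * hh q p (k+1) * hh q p k
          = PP q p k * hh q p k * hh q p (k+1) + PP q p k * th q p k := by
        show PP q p k * (1 + th q p k / (hh q p k * hh q p (k+1))) * hh q p (k+1) * hh q p k = _
        field_simp
      have h2 : dd q p (k+1) * hh q p k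
          ≤ PP q p k * hh q p k * hh q p (k+1) + PP q p k * th q p k := by
        have h3 : dd q p k * hh q p (k+1) ≤ PP q p k * hh q p k * hh q p (k+1) := by
          have := mul_le_mul_of_nonneg_right ih1 hhk1.le
          linarith
        linarith [ih2]
      rw [← hexp] at h2
      exact le_of_mul_le_mul_right h2 hhk
    · -- Wronskian step
      have hw := wron hq0 hqp k
      have e1 : q^3 * (dd q p (k+1) * hh q p k - dd q p k * hh q p (k+1))
          ≤ q^3 * (PP q p k * th q p k) := mul_le_mul_of_nonneg_left ih2 (by positivity)
      have e2 : q^3 * (q^2)^(k+1) * dd q p k * hh q p (k+1)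
          ≤ q^3 * (q^2)^(k+1) * (PP q p k * hh q p k) * hh q p (k+1) := by
        apply mul_le_mul_of_nonneg_right _ hhk1.le
        exact mul_le_mul_of_nonneg_left ih1 (by positivity)
      have eth : PP q p k * th q p (k+1)
          = q^3 * (PP q p k * th q p k)
            + q^3 * (q^2)^(k+1) * (PP q p k * hh q p k) * hh q p (k+1) := by
        show PP q p k * (q ^ 3 * th q p k + q ^ 5 * (q^2) ^ k * hh q p k * hh q p (k+1)) = _
        have : q^3 * (q^2)^(k+1) = q^5 * (q^2)^k := by rw [pow_succ]; ring
        rw [show q^3 * (q^2)^(k+1) * (PP q p k * hh q p k) * hh q p (k+1)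
            = q^3 * (q^2)^(k+1) * PP q p k * hh q p k * hh q p (k+1) by ring, this]
        ring
      have efin : dd q p (k+2) * hh q p (k+1) - dd q p (k+1) * hh q p (k+2)
          ≤ PP q p k * th q p (k+1) := by
        rw [hw, eth]
        linarith
      apply efin.trans
      apply mul_le_mul_of_nonneg_right hPmono (th_nonneg hq0 hqp (k+1))

lemma dd_le (hq0 : 0 < q) (hqp : q < p) (hp1 : p < 1) (hpq : p ^ 2 < q) (k : ℕ) :
    dd q p k ≤ ED q p * (((k:ℝ)+1) * MM q p ^ k) := by
  have h1 := (gron hq0 hqp k).1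
  apply h1.trans
  have h2 := PP_le' hq0 hqp hp1 hpq k
  have h3 := hh_le hq0 hqp k
  have h4 := (hh_pos hq0 hqp k).le
  have h5 := (PP_pos hq0 hqp k).le
  have hED : 0 ≤ ED q p := (Real.exp_pos _).le
  calc PP q p k * hh q p k ≤ ED q p * hh q p k := mul_le_mul_of_nonneg_right h2 h4
    _ ≤ ED q p * (((k:ℝ)+1) * MM q p ^ k) := mul_le_mul_of_nonneg_left h3 hED

end Seq2


/-! ### Bounds for ee, uu, poch -/

noncomputable def Be (q p : ℝ) : ℝ := q^3/p^2 + q^5 * ED q p / tt q p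

noncomputable def Ku (q p : ℝ) : ℝ :=
  1/p^2 + Be q p/(p^2 * tt q p) + q^2 * ED q p / tt q p

noncomputable def pc (q : ℝ) : ℝ := Real.exp (-(q^2/(1-q^2)^2))

section Seq3

variable {q p : ℝ}

lemma ED_pos : 0 < ED q p := Real.exp_pos _

lemma ee_nonneg (hq0 : 0 < q) (hqp : q < p) (k : ℕ) : 0 ≤ ee q p k := by
  have h := (dd_pos_ge hq0 hqp k).2
  rw [ee]; linarith

lemma ee_zero : ee q p 0 = q^3/p^2 := by
  rw [ee, dd_one, dd_zero]; ring

lemma ee_rec (hq0 : 0 < q) (hqp : q < p) (k : ℕ) :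
    ee q p (k+1) = (q^3/p^2) * ee q p k + q^5 * (q^2)^k * dd q p k := by
  have hp := hp0 hq0 hqp
  have hpne : p ≠ 0 := ne_of_gt hp
  rw [ee, ee, dd_rec]
  field_simp
  ring

lemma Be_pos (hq0 : 0 < q) (hqp : q < p) : 0 < Be q p := by
  have hp := hp0 hq0 hqp
  have ht := ht0 hq0 hqp
  have hE := ED_pos (q := q) (p := p)
  rw [Be]; positivity

lemma ee_bound (hq0 : 0 < q) (hqp : q < p) (hp1 : p < 1) (hpq : p ^ 2 < q) (k : ℕ) :
    ee q p k ≤ Be q p * (((k:ℝ)+1)^2 * tt q p ^ k) := by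
  have hp := hp0 hq0 hqp
  have ht := ht0 hq0 hqp
  have hE := ED_pos (q := q) (p := p)
  have hM := hM0 (q := q) (p := p) hq0 hqp
  induction k with
  | zero =>
    rw [ee_zero]
    have h1 : 0 < q^5 * ED q p / tt q p := by positivity
    rw [Be]
    norm_num
    nlinarith
  | succ k ih =>
    rw [ee_rec hq0 hqp]
    have hst : q^3/p^2 ≤ tt q p := le_max_left _ _
    have hmt : q^2 * MM q p ≤ tt q p := le_max_right _ _
    have htk : (0:ℝ) ≤ tt q p ^ k := by positivity
    have e1 : (q^3/p^2) * ee q p k ≤ tt q p * (Be q p * (((k:ℝ)+1)^2 * tt q p ^ k)) := by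
      calc (q^3/p^2) * ee q p k ≤ (q^3/p^2) * (Be q p * (((k:ℝ)+1)^2 * tt q p ^ k)) :=
            mul_le_mul_of_nonneg_left ih (by positivity)
        _ ≤ tt q p * (Be q p * (((k:ℝ)+1)^2 * tt q p ^ k)) := by
            apply mul_le_mul_of_nonneg_right hst
            have := Be_pos hq0 hqp
            positivity
    have e2 : q^5 * (q^2)^k * dd q p k ≤ q^5 * ED q p * (((k:ℝ)+1) * (q^2 * MM q p)^k) := by
      have hdd := dd_le hq0 hqp hp1 hpq k
      calc q^5 * (q^2)^k * dd q p k
          ≤ q^5 * (q^2)^k * (ED q p * (((k:ℝ)+1) * MM q p ^ k)) := by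
            apply mul_le_mul_of_nonneg_left hdd (by positivity)
        _ = q^5 * ED q p * (((k:ℝ)+1) * (q^2 * MM q p)^k) := by
            rw [mul_pow]; ring
    have e3 : (q^2 * MM q p)^k ≤ tt q p ^ k := pow_le_pow_left₀ (by positivity) hmt k
    have e4 : q^5 * ED q p * (((k:ℝ)+1) * (q^2 * MM q p)^k)
        ≤ q^5 * ED q p * (((k:ℝ)+1) * tt q p ^ k) := by
      apply mul_le_mul_of_nonneg_left _ (by positivity)
      exact mul_le_mul_of_nonneg_left e3 (by positivity)
    have hBe := Be_pos hq0 hqp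
    have key : tt q p * (Be q p * (((k:ℝ)+1)^2 * tt q p ^ k))
          + q^5 * ED q p * (((k:ℝ)+1) * tt q p ^ k)
        ≤ Be q p * ((((k:ℝ)+1)+1)^2 * tt q p ^ (k+1)) := by
      rw [pow_succ (tt q p) k]
      have hq5 : q^5 * ED q p ≤ Be q p * tt q p := by
        rw [Be]
        have h7 : (q^3/p^2) * tt q p > 0 := by positivity
        have e5 : q^5 * ED q p / tt q p * tt q p = q^5 * ED q p := by field_simp
        nlinarith
      have hk1 : (0:ℝ) ≤ (k:ℝ)+1 := by positivity
      have m1 : q^5 * ED q p * (((k:ℝ)+1) * tt q p ^ k)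
          ≤ Be q p * tt q p * (((k:ℝ)+1) * tt q p ^ k) :=
        mul_le_mul_of_nonneg_right hq5 (by positivity)
      have m2 : Be q p * tt q p * tt q p ^ k * ((((k:ℝ)+1)^2 + ((k:ℝ)+1)))
          ≤ Be q p * tt q p * tt q p ^ k * ((((k:ℝ)+1)+1)^2) := by
        apply mul_le_mul_of_nonneg_left _ (by positivity)
        nlinarith
      nlinarith [m1, m2]
    push_cast
    linarith [e1, e2.trans e4, key]

lemma uu_zero (hq0 : 0 < q) (hqp : q < p) : uu q p 0 = 1/p^2 := by
  rw [uu]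
  norm_num [dd_zero]

lemma uu_succ (hq0 : 0 < q) (hqp : q < p) (l : ℕ) :
    uu q p (l+1) = ee q p l / p^2 + (q^2)^(l+1) * dd q p l := by
  have hp := hp0 hq0 hqp
  have hpne : p ≠ 0 := ne_of_gt hp
  rw [uu, ee, Nat.add_sub_cancel]
  field_simp
  ring

lemma uu_pos (hq0 : 0 < q) (hqp : q < p) (l : ℕ) : 0 < uu q p l := by
  have hp := hp0 hq0 hqp
  cases l with
  | zero => rw [uu_zero hq0 hqp]; positivity
  | succ l =>
    rw [uu_succ hq0 hqp]
    have h1 := ee_nonneg hq0 hqp l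
    have h2 := (dd_pos_ge hq0 hqp l).1
    have h3 : 0 < (q^2)^(l+1) * dd q p l := by positivity
    have h4 : 0 ≤ ee q p l / p^2 := by positivity
    linarith

lemma Ku_pos (hq0 : 0 < q) (hqp : q < p) : 0 < Ku q p := by
  have hp := hp0 hq0 hqp
  have ht := ht0 hq0 hqp
  have hE := ED_pos (q := q) (p := p)
  have hBe := Be_pos hq0 hqp
  rw [Ku]; positivity

lemma uu_bound (hq0 : 0 < q) (hqp : q < p) (hp1 : p < 1) (hpq : p ^ 2 < q) (l : ℕ) :
    uu q p l ≤ Ku q p * (((l:ℝ)+1)^2 * tt q p ^ l) := by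
  have hp := hp0 hq0 hqp
  have ht := ht0 hq0 hqp
  have hE := ED_pos (q := q) (p := p)
  have hBe := Be_pos hq0 hqp
  have hM := hM0 (q := q) (p := p) hq0 hqp
  cases l with
  | zero =>
    rw [uu_zero hq0 hqp, Ku]
    have h1 : 0 < Be q p/(p^2 * tt q p) := by positivity
    have h2 : 0 < q^2 * ED q p / tt q p := by positivity
    norm_num
    nlinarith
  | succ l =>
    rw [uu_succ hq0 hqp]
    have hmt : q^2 * MM q p ≤ tt q p := le_max_right _ _
    have htl : (0:ℝ) ≤ tt q p ^ l := by positivity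
    have e1 : ee q p l / p^2 ≤ (Be q p/p^2) * (((l:ℝ)+1)^2 * tt q p ^ l) := by
      have := ee_bound hq0 hqp hp1 hpq l
      rw [div_eq_mul_inv, div_eq_mul_inv]
      calc ee q p l * (p^2)⁻¹ ≤ (Be q p * (((l:ℝ)+1)^2 * tt q p ^ l)) * (p^2)⁻¹ :=
            mul_le_mul_of_nonneg_right this (by positivity)
        _ = Be q p * (p^2)⁻¹ * (((l:ℝ)+1)^2 * tt q p ^ l) := by ring
    have e2 : (q^2)^(l+1) * dd q p l ≤ q^2 * ED q p * (((l:ℝ)+1) * tt q p ^ l) := by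
      have hdd := dd_le hq0 hqp hp1 hpq l
      have e3 : (q^2 * MM q p)^l ≤ tt q p ^ l := pow_le_pow_left₀ (by positivity) hmt l
      calc (q^2)^(l+1) * dd q p l
          ≤ (q^2)^(l+1) * (ED q p * (((l:ℝ)+1) * MM q p ^ l)) := by
            apply mul_le_mul_of_nonneg_left hdd (by positivity)
        _ = q^2 * ED q p * (((l:ℝ)+1) * (q^2 * MM q p)^l) := by
            rw [pow_succ, mul_pow]; ring
        _ ≤ q^2 * ED q p * (((l:ℝ)+1) * tt q p ^ l) := by
            apply mul_le_mul_of_nonneg_left _ (by positivity)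
            exact mul_le_mul_of_nonneg_left e3 (by positivity)
    have et : tt q p ^ (l+1) = tt q p ^ l * tt q p := pow_succ _ _
    have g1 : (Be q p/p^2) * (((l:ℝ)+1)^2 * tt q p ^ l)
        ≤ (Be q p/(p^2 * tt q p)) * ((((l:ℝ)+1)+1)^2 * tt q p ^ (l+1)) := by
      have eA : (Be q p/(p^2 * tt q p)) * ((((l:ℝ)+1)+1)^2 * tt q p ^ (l+1))
          = (Be q p/p^2) * ((((l:ℝ)+1)+1)^2 * tt q p ^ l) := by
        rw [et]; field_simp
      rw [eA]
      apply mul_le_mul_of_nonneg_left _ (by positivity)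
      apply mul_le_mul_of_nonneg_right _ htl
      nlinarith
    have g2 : q^2 * ED q p * (((l:ℝ)+1) * tt q p ^ l)
        ≤ (q^2 * ED q p / tt q p) * ((((l:ℝ)+1)+1)^2 * tt q p ^ (l+1)) := by
      have eB : (q^2 * ED q p / tt q p) * ((((l:ℝ)+1)+1)^2 * tt q p ^ (l+1))
          = q^2 * ED q p * ((((l:ℝ)+1)+1)^2 * tt q p ^ l) := by
        rw [et]; field_simp
      rw [eB]
      apply mul_le_mul_of_nonneg_left _ (by positivity)
      apply mul_le_mul_of_nonneg_right _ htl
      nlinarith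
    have g3 : (0:ℝ) ≤ (1/p^2) * ((((l:ℝ)+1)+1)^2 * tt q p ^ (l+1)) := by positivity
    have key : (Be q p/p^2) * (((l:ℝ)+1)^2 * tt q p ^ l)
          + q^2 * ED q p * (((l:ℝ)+1) * tt q p ^ l)
        ≤ Ku q p * ((((l:ℝ)+1)+1)^2 * tt q p ^ (l+1)) := by
      rw [Ku, add_mul, add_mul]
      linarith [g1, g2, g3]
    push_cast
    linarith [e1, e2, key]

lemma poch_pos (hq0 : 0 < q) (hq1' : q < 1) (l : ℕ) : 0 < poch q l ∧ poch q l ≤ 1 := by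
  have hq2 : q^2 < 1 := by nlinarith
  induction l with
  | zero => exact ⟨one_pos, le_refl 1⟩
  | succ l ih =>
    obtain ⟨ih1, ih2⟩ := ih
    have h1 : (q^2)^(l+1) < 1 := pow_lt_one₀ (by positivity) hq2 (by omega)
    have h2 : 0 < (q^2)^(l+1) := by positivity
    constructor
    · show 0 < poch q l * (1 - (q^2)^(l+1))
      apply mul_pos ih1 (by linarith)
    · show poch q l * (1 - (q^2)^(l+1)) ≤ 1
      nlinarith

lemma poch_ge (hq0 : 0 < q) (hq1' : q < 1) (l : ℕ) : pc q ≤ poch q l := by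
  have hq2 : q^2 < 1 := by nlinarith
  have hq2' : (0:ℝ) < 1 - q^2 := by linarith
  have main : ∀ l : ℕ, Real.exp (-(q^2*(1 - (q^2)^l)/(1-q^2)^2)) ≤ poch q l := by
    intro l
    induction l with
    | zero => simp [poch]
    | succ l ih =>
      have hx : (q^2)^(l+1) ≤ q^2 := by
        have h8 : (q^2)^(l+1) ≤ (q^2)^1 :=
          pow_le_pow_of_le_one (by positivity) hq2.le (by omega)
        simpa using h8
      have hx0 : (0:ℝ) ≤ (q^2)^(l+1) := by positivity
      have hexp := exp_le_one_sub hx0 hx hq2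
      have esplit : Real.exp (-(q^2*(1 - (q^2)^(l+1))/(1-q^2)^2))
          = Real.exp (-(q^2*(1 - (q^2)^l)/(1-q^2)^2))
            * Real.exp (-((q^2)^(l+1)/(1-q^2))) := by
        rw [← Real.exp_add]
        congr 1
        field_simp
        ring
      show _ ≤ poch q l * (1 - (q^2)^(l+1))
      rw [esplit]
      have h1 : 0 < Real.exp (-(q^2*(1 - (q^2)^l)/(1-q^2)^2)) := Real.exp_pos _
      have h2 : 0 ≤ 1 - (q^2)^(l+1) := by
        have := pow_lt_one₀ (a := q^2) (by positivity) hq2 (n := l+1) (by omega)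
        linarith
      calc Real.exp (-(q^2*(1 - (q^2)^l)/(1-q^2)^2)) * Real.exp (-((q^2)^(l+1)/(1-q^2)))
          ≤ Real.exp (-(q^2*(1 - (q^2)^l)/(1-q^2)^2)) * (1 - (q^2)^(l+1)) :=
            mul_le_mul_of_nonneg_left hexp h1.le
        _ ≤ poch q l * (1 - (q^2)^(l+1)) := mul_le_mul_of_nonneg_right ih h2
  apply le_trans _ (main l)
  rw [pc]
  apply Real.exp_le_exp.mpr
  have h3 : 0 ≤ (q^2)^l := by positivity
  have h4 : 0 < (1-q^2)^2 := by positivity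
  rw [neg_le_neg_iff, div_le_div_iff₀ h4 h4]
  nlinarith [mul_nonneg (mul_nonneg (by positivity : (0:ℝ) ≤ q^2) h3) h4.le]

lemma pc_pos : 0 < pc q := Real.exp_pos _

end Seq3


/-! ### The coordinate identities -/

section Ident

variable {q p : ℝ}

lemma poch_succ (l : ℕ) : poch q (l+1) = poch q l * (1 - (q^2)^(l+1)) := rfl

lemma q2pow_lt_one₀ (hq0 : 0 < q) (hq1' : q < 1) (j : ℕ) (hj : 1 ≤ j) : (q^2)^j < 1 :=
  pow_lt_one₀ (by positivity) (by nlinarith) (by omega)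

lemma sqrt_poch_succ (hq0 : 0 < q) (hq1' : q < 1) (l : ℕ) :
    Real.sqrt (poch q (l+1)) = Real.sqrt (poch q l) * Real.sqrt (1 - (q^2)^(l+1)) := by
  rw [poch_succ, Real.sqrt_mul (poch_pos hq0 hq1' l).1.le]

lemma idA (hq0 : 0 < q) (hqp : q < p) (hp1 : p < 1) (k : ℕ) :
    (1 + q^3/p^4) * cc q p k
      - (p^2)⁻¹ * (Real.sqrt (1 - (q^2)^(k+1)) * cc q p (k+1))
      - (q^3/p^2) * (Real.sqrt (1 - (q^2)^k) * cc q p (k-1)) = 0 := by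
  have hq1' : q < 1 := hq1 hqp hp1
  have hp := hp0 hq0 hqp
  have hpne : p ≠ 0 := ne_of_gt hp
  cases k with
  | zero =>
    have h2 : (0:ℝ) < 1 - q^2 := by nlinarith
    have e1 : poch q 1 = 1 - q^2 := by
      rw [poch_succ, show poch q 0 = (1:ℝ) from rfl]
      norm_num
    have e2 : cc q p 1 = (p^2 + q^3/p^2)/Real.sqrt (1-q^2) := by
      rw [cc, e1, dd_one]
    have e3 : cc q p 0 = 1 := by
      rw [cc]
      simp [dd_zero, poch, Real.sqrt_one]
    have e4 : Real.sqrt (1 - (q^2)^(0+1)) = Real.sqrt (1-q^2) := by norm_num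
    have e5 : Real.sqrt (1 - (q^2)^(0:ℕ)) = 0 := by
      norm_num
    have hsne : Real.sqrt (1-q^2) ≠ 0 := by
      apply ne_of_gt
      exact Real.sqrt_pos.mpr h2
    rw [e2, e3, e4, e5]
    have e6 : Real.sqrt (1-q^2) * ((p^2 + q^3/p^2)/Real.sqrt (1-q^2))
        = p^2 + q^3/p^2 := by
      field_simp
    rw [e6]
    field_simp
    ring
  | succ j =>
    have hpos1 : (0:ℝ) < 1 - (q^2)^(j+1) := by
      have := q2pow_lt_one₀ hq0 hq1' (j+1) (by omega)
      linarith
    have hpos2 : (0:ℝ) < 1 - (q^2)^(j+2) := by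
      have := q2pow_lt_one₀ hq0 hq1' (j+2) (by omega)
      linarith
    have hPpos : 0 < Real.sqrt (poch q j) := Real.sqrt_pos.mpr (poch_pos hq0 hq1' j).1
    set P := Real.sqrt (poch q j) with hP
    set S1 := Real.sqrt (1 - (q^2)^(j+1)) with hS1
    set S2 := Real.sqrt (1 - (q^2)^(j+2)) with hS2
    have hS1pos : 0 < S1 := Real.sqrt_pos.mpr hpos1
    have hS2pos : 0 < S2 := Real.sqrt_pos.mpr hpos2
    have hS1sq : S1^2 = 1 - (q^2)^(j+1) := Real.sq_sqrt hpos1.le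
    have hPne : P ≠ 0 := ne_of_gt hPpos
    have hS1ne : S1 ≠ 0 := ne_of_gt hS1pos
    have hS2ne : S2 ≠ 0 := ne_of_gt hS2pos
    have ei : (j+1) - 1 = j := by omega
    rw [ei, cc, cc, cc, show j+1+1 = j+2 from rfl,
      sqrt_poch_succ hq0 hq1' (j+1), sqrt_poch_succ hq0 hq1' j]
    rw [← hP, ← hS1, ← hS2]
    have e3 : S1 * (dd q p j / P) = ((1 - (q^2)^(j+1)) * dd q p j) / (P * S1) := by
      rw [← hS1sq]
      field_simp
    have e4 : S2 * (dd q p (j+2) / (P * S1 * S2)) = dd q p (j+2) / (P * S1) := by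
      field_simp
    rw [e3, e4, dd_rec]
    field_simp
    try ring
  
lemma idB (hq0 : 0 < q) (hqp : q < p) (hp1 : p < 1) (k : ℕ) :
    q^k * ww q p k = (p^2)⁻¹ * cc q p k - Real.sqrt (1 - (q^2)^k) * cc q p (k-1) := by
  have hq1' : q < 1 := hq1 hqp hp1
  have hp := hp0 hq0 hqp
  have hpne : p ≠ 0 := ne_of_gt hp
  have hqne : q ≠ 0 := ne_of_gt hq0
  cases k with
  | zero =>
    have e5 : Real.sqrt (1 - (q^2)^(0:ℕ)) = 0 := by norm_num
    rw [e5, ww, uu_zero hq0 hqp, cc]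
    simp [dd_zero, poch, Real.sqrt_one]
    try field_simp
  | succ j =>
    have hpos1 : (0:ℝ) < 1 - (q^2)^(j+1) := by
      have := q2pow_lt_one₀ hq0 hq1' (j+1) (by omega)
      linarith
    have hPpos : 0 < Real.sqrt (poch q j) := Real.sqrt_pos.mpr (poch_pos hq0 hq1' j).1
    set P := Real.sqrt (poch q j) with hP
    set S1 := Real.sqrt (1 - (q^2)^(j+1)) with hS1
    have hS1pos : 0 < S1 := Real.sqrt_pos.mpr hpos1
    have hS1sq : S1^2 = 1 - (q^2)^(j+1) := Real.sq_sqrt hpos1.le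
    have hPne : P ≠ 0 := ne_of_gt hPpos
    have hS1ne : S1 ≠ 0 := ne_of_gt hS1pos
    have hqj : (q:ℝ)^(j+1) ≠ 0 := by positivity
    have ei : (j+1) - 1 = j := by omega
    rw [ei, ww, cc, cc, uu, ei, sqrt_poch_succ hq0 hq1' j, ← hP, ← hS1]
    have e3 : S1 * (dd q p j / P) = ((1 - (q^2)^(j+1)) * dd q p j) / (P * S1) := by
      rw [← hS1sq]
      field_simp
    rw [e3]
    field_simp
    try ring

end Ident


/-! ### Square-summability -/

section Summ

variable {q p : ℝ}

lemma hM1 (hq0 : 0 < q) (hqp : q < p) (hp1 : p < 1) (hpq : p^2 < q) : MM q p < 1 :=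
  (hMq hq0 hqp hpq).trans (hq1 hqp hp1)

lemma cc_sq_bound (hq0 : 0 < q) (hqp : q < p) (hp1 : p < 1) (hpq : p^2 < q) (l : ℕ) :
    cc q p l ^ 2 ≤ (ED q p^2/pc q) * ((1 - Real.sqrt (MM q p))⁻¹)^2 * MM q p ^ l := by
  have hq1' : q < 1 := hq1 hqp hp1
  have hM := hM0 (q := q) (p := p) hq0 hqp
  have hMlt1 := hM1 hq0 hqp hp1 hpq
  have hsM1 : Real.sqrt (MM q p) < 1 := by
    calc Real.sqrt (MM q p) < Real.sqrt 1 := Real.sqrt_lt_sqrt hM.le hMlt1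
      _ = 1 := Real.sqrt_one
  have hpcp := pc_pos (q := q)
  have hpochp := (poch_pos hq0 hq1' l).1
  have hddp := (dd_pos_ge hq0 hqp l).1
  have hE := ED_pos (q := q) (p := p)
  have h1 : cc q p l^2 = dd q p l^2/poch q l := by
    rw [cc, div_pow, Real.sq_sqrt hpochp.le]
  have h2 : dd q p l^2 ≤ ED q p^2*(((l:ℝ)+1)^2 * (MM q p^l)^2) := by
    have hb := dd_le hq0 hqp hp1 hpq l
    have := pow_le_pow_left₀ hddp.le hb 2
    calc dd q p l^2 ≤ (ED q p * (((l:ℝ)+1) * MM q p ^ l))^2 := this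
      _ = ED q p^2*(((l:ℝ)+1)^2 * (MM q p^l)^2) := by ring
  have h3 : dd q p l^2/poch q l ≤ dd q p l^2/pc q :=
    div_le_div_of_nonneg_left (by positivity) hpcp (poch_ge hq0 hq1' l)
  have hb2 : ((l:ℝ)+1) * Real.sqrt (MM q p)^l ≤ (1 - Real.sqrt (MM q p))⁻¹ := by
    have := nat_mul_pow_le (Real.sqrt_nonneg (MM q p)) hsM1 l
    rwa [one_div] at this
  have e : (((l:ℝ)+1) * Real.sqrt (MM q p)^l)^2 = ((l:ℝ)+1)^2 * MM q p^l := by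
    have e2 : (Real.sqrt (MM q p)^l)^2 = MM q p^l := by
      rw [← pow_mul, mul_comm l 2, pow_mul, Real.sq_sqrt hM.le]
    rw [mul_pow, e2]
  have h4 : ((l:ℝ)+1)^2 * (MM q p^l)^2 ≤ ((1 - Real.sqrt (MM q p))⁻¹)^2 * MM q p^l := by
    have h5 : (((l:ℝ)+1) * Real.sqrt (MM q p)^l)^2 ≤ ((1 - Real.sqrt (MM q p))⁻¹)^2 :=
      pow_le_pow_left₀ (by positivity) hb2 2
    rw [e] at h5
    calc ((l:ℝ)+1)^2 * (MM q p^l)^2 = (((l:ℝ)+1)^2 * MM q p^l) * MM q p^l := by ring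
      _ ≤ ((1 - Real.sqrt (MM q p))⁻¹)^2 * MM q p^l :=
          mul_le_mul_of_nonneg_right h5 (by positivity)
  calc cc q p l^2 = dd q p l^2/poch q l := h1
    _ ≤ dd q p l^2/pc q := h3
    _ ≤ (ED q p^2*(((l:ℝ)+1)^2 * (MM q p^l)^2))/pc q := by
        exact (div_le_div_iff_of_pos_right hpcp).mpr h2
    _ = (ED q p^2/pc q) * (((l:ℝ)+1)^2 * (MM q p^l)^2) := by ring
    _ ≤ (ED q p^2/pc q) * (((1 - Real.sqrt (MM q p))⁻¹)^2 * MM q p^l) :=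
        mul_le_mul_of_nonneg_left h4 (by positivity)
    _ = (ED q p^2/pc q) * ((1 - Real.sqrt (MM q p))⁻¹)^2 * MM q p ^ l := by ring

lemma summable_cc_sq (hq0 : 0 < q) (hqp : q < p) (hp1 : p < 1) (hpq : p^2 < q) :
    Summable (fun l => cc q p l ^ 2) := by
  have hM := hM0 (q := q) (p := p) hq0 hqp
  apply Summable.of_nonneg_of_le (fun l => sq_nonneg _) (cc_sq_bound hq0 hqp hp1 hpq)
  exact (summable_geometric_of_lt_one hM.le (hM1 hq0 hqp hp1 hpq)).mul_left _

lemma hz1 (hq0 : 0 < q) (hqp : q < p) (hp1 : p < 1) (hpq : p^2 < q) : tt q p / q < 1 := by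
  rw [div_lt_one hq0]
  exact htq hq0 hqp hp1 hpq

lemma ww_sq_bound (hq0 : 0 < q) (hqp : q < p) (hp1 : p < 1) (hpq : p^2 < q) (l : ℕ) :
    ww q p l ^ 2 ≤ (Ku q p^2/pc q)
      * ((1 - Real.sqrt (Real.sqrt (tt q p/q)))⁻¹)^4 * (tt q p/q) ^ l := by
  have hq1' : q < 1 := hq1 hqp hp1
  have ht := ht0 hq0 hqp
  have hKu := Ku_pos hq0 hqp
  have hpcp := pc_pos (q := q)
  have hpochp := (poch_pos hq0 hq1' l).1
  have huup := uu_pos hq0 hqp l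
  set z := tt q p / q with hzdef
  have hz0 : 0 ≤ z := by positivity
  have hzlt1 := hz1 hq0 hqp hp1 hpq
  set y := Real.sqrt (Real.sqrt z) with hydef
  have hy0 : 0 ≤ y := Real.sqrt_nonneg _
  have hy1 : y < 1 := by
    have hsz : Real.sqrt z < 1 := by
      calc Real.sqrt z < Real.sqrt 1 := Real.sqrt_lt_sqrt hz0 hzlt1
        _ = 1 := Real.sqrt_one
    calc y < Real.sqrt 1 := Real.sqrt_lt_sqrt (Real.sqrt_nonneg _) hsz
      _ = 1 := Real.sqrt_one
  have hy4 : y^4 = z := by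
    have h1 : y^2 = Real.sqrt z := Real.sq_sqrt (Real.sqrt_nonneg _)
    have h2 : (y^2)^2 = z := by rw [h1]; exact Real.sq_sqrt hz0
    calc y^4 = (y^2)^2 := by ring
      _ = z := h2
  have h1 : ww q p l^2 = uu q p l^2/((q^l)^2 * poch q l) := by
    rw [ww, div_pow, mul_pow, Real.sq_sqrt hpochp.le]
  have h2 : uu q p l^2 ≤ Ku q p^2*(((l:ℝ)+1)^4 * (tt q p^l)^2) := by
    have hb := uu_bound hq0 hqp hp1 hpq l
    have := pow_le_pow_left₀ huup.le hb 2
    calc uu q p l^2 ≤ (Ku q p * (((l:ℝ)+1)^2 * tt q p ^ l))^2 := this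
      _ = Ku q p^2*(((l:ℝ)+1)^4 * (tt q p^l)^2) := by ring
  have h3 : uu q p l^2/((q^l)^2 * poch q l) ≤ uu q p l^2/((q^l)^2 * pc q) := by
    apply div_le_div_of_nonneg_left (by positivity) (by positivity)
    exact mul_le_mul_of_nonneg_left (poch_ge hq0 hq1' l) (by positivity)
  have ez : z^l = tt q p^l/q^l := by rw [hzdef, div_pow]
  have h4 : uu q p l^2/((q^l)^2 * pc q)
      ≤ (Ku q p^2/pc q) * (((l:ℝ)+1)^4 * (z^l)^2) := by
    have e5 : (Ku q p^2/pc q) * (((l:ℝ)+1)^4 * (z^l)^2)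
        = (Ku q p^2*(((l:ℝ)+1)^4 * (tt q p^l)^2))/((q^l)^2 * pc q) := by
      rw [ez]
      have hql : (q:ℝ)^l ≠ 0 := by positivity
      field_simp
    rw [e5]
    exact (div_le_div_iff_of_pos_right (by positivity)).mpr h2
  have h5 : (((l:ℝ)+1) * y^l)^4 * z^l = ((l:ℝ)+1)^4 * (z^l)^2 := by
    have e6 : (y^l)^4 = z^l := by
      rw [← pow_mul, mul_comm l 4, pow_mul, hy4]
    calc (((l:ℝ)+1) * y^l)^4 * z^l = ((l:ℝ)+1)^4 * (y^l)^4 * z^l := by ring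
      _ = ((l:ℝ)+1)^4 * (z^l) * z^l := by rw [e6]
      _ = ((l:ℝ)+1)^4 * (z^l)^2 := by ring
  have hb2 : ((l:ℝ)+1) * y^l ≤ (1 - y)⁻¹ := by
    have := nat_mul_pow_le hy0 hy1 l
    rwa [one_div] at this
  have h6 : ((l:ℝ)+1)^4 * (z^l)^2 ≤ ((1 - y)⁻¹)^4 * z^l := by
    rw [← h5]
    apply mul_le_mul_of_nonneg_right _ (by positivity)
    exact pow_le_pow_left₀ (by positivity) hb2 4
  calc ww q p l^2 = uu q p l^2/((q^l)^2 * poch q l) := h1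
    _ ≤ uu q p l^2/((q^l)^2 * pc q) := h3
    _ ≤ (Ku q p^2/pc q) * (((l:ℝ)+1)^4 * (z^l)^2) := h4
    _ ≤ (Ku q p^2/pc q) * (((1 - y)⁻¹)^4 * z^l) :=
        mul_le_mul_of_nonneg_left h6 (by positivity)
    _ = (Ku q p^2/pc q) * ((1 - y)⁻¹)^4 * z^l := by ring

lemma summable_ww_sq (hq0 : 0 < q) (hqp : q < p) (hp1 : p < 1) (hpq : p^2 < q) :
    Summable (fun l => ww q p l ^ 2) := by
  have ht := ht0 hq0 hqp
  apply Summable.of_nonneg_of_le (fun l => sq_nonneg _) (ww_sq_bound hq0 hqp hp1 hpq)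
  exact (summable_geometric_of_lt_one (by positivity) (hz1 hq0 hqp hp1 hpq)).mul_left _

lemma mem_cc (hq0 : 0 < q) (hqp : q < p) (hp1 : p < 1) (hpq : p^2 < q) :
    Memℓp (fun l : ℕ => ((cc q p l : ℝ) : ℂ)) 2 := by
  apply memℓp_gen
  have heq : ∀ l : ℕ, ‖((cc q p l : ℝ) : ℂ)‖ ^ (2:ℝ≥0∞).toReal = cc q p l ^ 2 := by
    intro l
    have h1 : (2:ℝ≥0∞).toReal = ((2:ℕ):ℝ) := by simp
    rw [h1, Real.rpow_natCast, Complex.norm_real, Real.norm_eq_abs, sq_abs]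
  exact (summable_cc_sq hq0 hqp hp1 hpq).congr (fun l => (heq l).symm)

lemma mem_ww (hq0 : 0 < q) (hqp : q < p) (hp1 : p < 1) (hpq : p^2 < q) :
    Memℓp (fun l : ℕ => ((ww q p l : ℝ) : ℂ)) 2 := by
  apply memℓp_gen
  have heq : ∀ l : ℕ, ‖((ww q p l : ℝ) : ℂ)‖ ^ (2:ℝ≥0∞).toReal = ww q p l ^ 2 := by
    intro l
    have h1 : (2:ℝ≥0∞).toReal = ((2:ℕ):ℝ) := by simp
    rw [h1, Real.rpow_natCast, Complex.norm_real, Real.norm_eq_abs, sq_abs]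
  exact (summable_ww_sq hq0 hqp hp1 hpq).congr (fun l => (heq l).symm)

end Summ

end SUqAux

/-- For `0 < q < p < 1` with `p² < q`, the system
`[(1 + q³/p⁴) I − (1/p²) α − (q³/p²) α*] v₁₂ = 0`, `γ* v₃₂ = ((1/p²) I − α*) v₁₂`
has a solution by nonzero vectors `v₁₂, v₃₂ ∈ ℓ²(ℕ₀)`, where `α, γ` are the standard
`SU_q(2)` operators on `ℓ²(ℕ₀)`. -/
theorem exists_nonzero_solution_case_p_sq_lt_q
    (q p : ℝ) (hq0 : 0 < q) (hqp : q < p) (hp1 : p < 1) (hpq : p ^ 2 < q)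
    (α γ : lp (fun _ : ℕ => ℂ) 2 →L[ℂ] lp (fun _ : ℕ => ℂ) 2)
    (hα0 : α (lp.single 2 0 (1 : ℂ)) = 0)
    (hαk : ∀ k : ℕ, 1 ≤ k →
      α (lp.single 2 k (1 : ℂ)) =
        ((Real.sqrt (1 - q ^ (2 * k)) : ℝ) : ℂ) • lp.single 2 (k - 1) (1 : ℂ))
    (hγ : ∀ l : ℕ, γ (lp.single 2 l (1 : ℂ)) = ((q : ℂ) ^ l) • lp.single 2 l (1 : ℂ))
    (hsa : IsSelfAdjoint γ)
    (h1 : α * γ = (q : ℂ) • (γ * α))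
    (h2 : α * star γ = (q : ℂ) • (star γ * α))
    (h3 : star γ * γ = γ * star γ)
    (h4 : star α * α + star γ * γ = 1)
    (h5 : α * star α + ((q : ℂ) ^ 2) • (star γ * γ) = 1) :
    ∃ v₁₂ v₃₂ : lp (fun _ : ℕ => ℂ) 2, v₁₂ ≠ 0 ∧ v₃₂ ≠ 0 ∧
      (((1 + q ^ 3 / p ^ 4 : ℝ) : ℂ) • v₁₂ - (((p ^ 2)⁻¹ : ℝ) : ℂ) • α v₁₂
        - ((q ^ 3 / p ^ 2 : ℝ) : ℂ) • (star α) v₁₂ = 0) ∧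
      (star γ) v₃₂ = (((p ^ 2)⁻¹ : ℝ) : ℂ) • v₁₂ - (star α) v₁₂ := by
  classical
  have hq1' : q < 1 := SUqAux.hq1 hqp hp1
  have hp := SUqAux.hp0 hq0 hqp
  -- coordinate evaluation via adjoints
  have key : ∀ (T : lp (fun _ : ℕ => ℂ) 2 →L[ℂ] lp (fun _ : ℕ => ℂ) 2)
      (v : lp (fun _ : ℕ => ℂ) 2) (k : ℕ),
      (T v : ∀ _ : ℕ, ℂ) k = @inner ℂ _ _ ((star T) (lp.single 2 k (1:ℂ))) v := by
    intro T v k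
    have h1 : (T v : ∀ _ : ℕ, ℂ) k = @inner ℂ _ _ (lp.single 2 k (1:ℂ)) (T v) := by
      rw [lp.inner_single_left]
      simp [RCLike.inner_apply]
    rw [h1, ContinuousLinearMap.star_eq_adjoint, ContinuousLinearMap.adjoint_inner_left]
  have hsαc : ∀ (v : lp (fun _ : ℕ => ℂ) 2) (k : ℕ),
      ((star α) v : ∀ _ : ℕ, ℂ) k
        = ((Real.sqrt (1 - (q^2)^k) : ℝ) : ℂ) * (v : ∀ _ : ℕ, ℂ) (k-1) := by
    intro v k
    rw [key (star α) v k, star_star]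
    cases k with
    | zero =>
      rw [hα0]
      simp
    | succ j =>
      rw [hαk (j+1) (by omega)]
      rw [inner_smul_left, lp.inner_single_left]
      have e : (q:ℝ)^(2*(j+1)) = (q^2)^(j+1) := pow_mul q 2 (j+1)
      rw [Complex.conj_ofReal]
      simp only [RCLike.inner_apply, map_one, one_mul]
      rw [e, mul_one]
  have hαadj : ∀ k : ℕ, (star α) (lp.single 2 k (1:ℂ))
      = ((Real.sqrt (1 - (q^2)^(k+1)) : ℝ) : ℂ) • lp.single 2 (k+1) (1:ℂ) := by
    intro k
    apply lp.ext
    funext i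
    rw [hsαc (lp.single 2 k (1:ℂ)) i]
    rw [lp.coeFn_smul, Pi.smul_apply, smul_eq_mul]
    cases i with
    | zero =>
      have e1 : ((lp.single 2 (k+1) (1:ℂ)) : ∀ _ : ℕ, ℂ) 0 = 0 := by
        rw [lp.single_apply_ne _ _ _ (by omega)]
      rw [e1]
      norm_num
    | succ j =>
      by_cases hjk : j = k
      · subst hjk
        have e1 : ((lp.single 2 (j+1) (1:ℂ)) : ∀ _ : ℕ, ℂ) (j+1) = 1 := by
          rw [lp.single_apply_self]
        have e2 : ((lp.single 2 j (1:ℂ)) : ∀ _ : ℕ, ℂ) (j+1-1) = 1 := by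
          rw [show j+1-1 = j by omega, lp.single_apply_self]
        rw [e1, e2]
      · have e1 : ((lp.single 2 (k+1) (1:ℂ)) : ∀ _ : ℕ, ℂ) (j+1) = 0 := by
          rw [lp.single_apply_ne _ _ _ (by omega)]
        have e2 : ((lp.single 2 k (1:ℂ)) : ∀ _ : ℕ, ℂ) (j+1-1) = 0 := by
          rw [show j+1-1 = j by omega, lp.single_apply_ne _ _ _ (by omega)]
        rw [e1, e2]
        norm_num
  have hαc : ∀ (v : lp (fun _ : ℕ => ℂ) 2) (k : ℕ),
      (α v : ∀ _ : ℕ, ℂ) k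
        = ((Real.sqrt (1 - (q^2)^(k+1)) : ℝ) : ℂ) * (v : ∀ _ : ℕ, ℂ) (k+1) := by
    intro v k
    rw [key α v k, hαadj k, inner_smul_left, lp.inner_single_left, Complex.conj_ofReal]
    simp only [RCLike.inner_apply, map_one, one_mul, mul_one]
  have hγc : ∀ (v : lp (fun _ : ℕ => ℂ) 2) (k : ℕ),
      ((star γ) v : ∀ _ : ℕ, ℂ) k = ((q^k : ℝ) : ℂ) * (v : ∀ _ : ℕ, ℂ) k := by
    intro v k
    rw [key (star γ) v k, star_star, hγ k, inner_smul_left, lp.inner_single_left]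
    have e : ((q:ℂ))^k = ((q^k : ℝ) : ℂ) := by push_cast; ring
    rw [e, Complex.conj_ofReal]
    simp only [RCLike.inner_apply, map_one, one_mul, mul_one]
  refine ⟨⟨fun l => ((SUqAux.cc q p l : ℝ) : ℂ), SUqAux.mem_cc hq0 hqp hp1 hpq⟩,
    ⟨fun l => ((SUqAux.ww q p l : ℝ) : ℂ), SUqAux.mem_ww hq0 hqp hp1 hpq⟩, ?_, ?_, ?_, ?_⟩
  · intro h0
    have h1 : ((SUqAux.cc q p 0 : ℝ) : ℂ) = 0 := by
      have h2 := congrArg (fun x : lp (fun _ : ℕ => ℂ) 2 => (x : ∀ _ : ℕ, ℂ) 0) h0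
      simpa using h2
    have h2 : SUqAux.cc q p 0 = 1 := by
      rw [SUqAux.cc, SUqAux.dd_zero, show SUqAux.poch q 0 = (1:ℝ) from rfl,
        Real.sqrt_one, div_one]
    rw [h2] at h1
    exact one_ne_zero (Complex.ofReal_eq_zero.mp h1)
  · intro h0
    have h1 : ((SUqAux.ww q p 0 : ℝ) : ℂ) = 0 := by
      have h2 := congrArg (fun x : lp (fun _ : ℕ => ℂ) 2 => (x : ∀ _ : ℕ, ℂ) 0) h0
      simpa using h2
    have h2 : SUqAux.ww q p 0 = 1/p^2 := by
      rw [SUqAux.ww, SUqAux.uu_zero hq0 hqp, show SUqAux.poch q 0 = (1:ℝ) from rfl,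
        Real.sqrt_one, pow_zero]
      norm_num
    rw [h2] at h1
    have h3 : (1/p^2 : ℝ) ≠ 0 := by positivity
    exact h3 (Complex.ofReal_eq_zero.mp h1)
  · apply lp.ext
    funext k
    simp only [lp.coeFn_sub, lp.coeFn_smul, Pi.sub_apply, Pi.smul_apply, smul_eq_mul,
      lp.coeFn_zero, Pi.zero_apply]
    rw [hαc, hsαc]
    have hre := SUqAux.idA (q := q) (p := p) hq0 hqp hp1 k
    have hgoal : ((1 + q^3/p^4 : ℝ) : ℂ) * ((SUqAux.cc q p k : ℝ) : ℂ)
        - (((p^2)⁻¹ : ℝ) : ℂ) * (((Real.sqrt (1-(q^2)^(k+1)) : ℝ) : ℂ)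
            * ((SUqAux.cc q p (k+1) : ℝ) : ℂ))
        - ((q^3/p^2 : ℝ) : ℂ) * (((Real.sqrt (1-(q^2)^k) : ℝ) : ℂ)
            * ((SUqAux.cc q p (k-1) : ℝ) : ℂ)) = 0 := by
      exact_mod_cast congrArg Complex.ofReal hre
    exact hgoal
  · apply lp.ext
    funext k
    simp only [lp.coeFn_sub, lp.coeFn_smul, Pi.sub_apply, Pi.smul_apply, smul_eq_mul]
    rw [hγc, hsαc]
    have hre := SUqAux.idB (q := q) (p := p) hq0 hqp hp1 k
    have hgoal : ((q^k : ℝ) : ℂ) * ((SUqAux.ww q p k : ℝ) : ℂ)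
        = (((p^2)⁻¹ : ℝ) : ℂ) * ((SUqAux.cc q p k : ℝ) : ℂ)
          - ((Real.sqrt (1-(q^2)^k) : ℝ) : ℂ) * ((SUqAux.cc q p (k-1) : ℝ) : ℂ) := by
      exact_mod_cast congrArg Complex.ofReal hre
    exact hgoal
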